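/- Let m ≥ 1, let c₁, …, c_m be real numbers, and let y₁, …, y_m be distinct real numbers. Define F(z) = −Σ_{i=1}^m c_i/(2(z − I·y_i)) for z ∈ ℂ ∖ {I·y₁, …, I·y_m}. Then for every ε with 0 < ε < min_{i≥2} |y₁ − y_i|: −Re ∮_{C(I·y₁, ε)} F(z)² dz = −π · Σ_{i=2}^m c₁·c_i/(y₁ − y_i). -/

import Mathlib

noncomputable section

open Complex

open Metric Set in
private theorem circleIntegral_add' {E : Type*} [NormedAddCommGroup E] [NormedSpace ℂ E]
    {f g : ℂ → E} {c : ℂ} {R : ℝ} (hf : CircleIntegrable f c R)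
    (hg : CircleIntegrable g c R) :
    (∮ z in C(c, R), f z + g z) = (∮ z in C(c, R), f z) + ∮ z in C(c, R), g z := by
  simp only [circleIntegral, smul_add, intervalIntegral.integral_add hf.out hg.out]

/-- The flux computation for `F(z) = −Σᵢ cᵢ/(2(z − I·yᵢ))` at the point `I·y₁`:
for `0 < ε < minᵢ₌₂ |y₁ − yᵢ|`,
`−Re ∮_{C(I·y₁,ε)} F(z)² dz = −π Σᵢ₌₂ c₁cᵢ/(y₁ − yᵢ)`. -/
theorem force_simple_poles (m : ℕ) (hm : 0 < m) (c : Fin m → ℝ) (y : Fin m → ℝ)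
    (hy : Function.Injective y) (ε : ℝ) (hε : 0 < ε)
    (hε' : ∀ i : Fin m, i ≠ ⟨0, hm⟩ → ε < |y ⟨0, hm⟩ - y i|) :
    -(∮ z in C(Complex.I * (y ⟨0, hm⟩ : ℂ), ε),
        (-(∑ i, (c i : ℂ) / (2 * (z - Complex.I * (y i : ℂ))))) ^ 2).re =
      -Real.pi * ∑ i ∈ Finset.univ.erase (⟨0, hm⟩ : Fin m),
        c ⟨0, hm⟩ * c i / (y ⟨0, hm⟩ - y i) := by
  classical
  set i0 : Fin m := ⟨0, hm⟩ with hi0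
  set a : ℂ := Complex.I * (y i0 : ℂ) with ha
  set S : ℂ → ℂ := fun z => ∑ j ∈ Finset.univ.erase i0, (c j : ℂ) / (2 * (z - Complex.I * (y j : ℂ)))
    with hS
  -- distance facts
  have hdist : ∀ j : Fin m, j ≠ i0 → ∀ z ∈ Metric.closedBall a ε, z ≠ Complex.I * (y j : ℂ) := by
    intro j hj z hz hzj
    have h1 : dist a (Complex.I * (y j : ℂ)) = |y i0 - y j| := by
      rw [dist_eq, ha]
      rw [← mul_sub]
      rw [norm_mul, Complex.norm_I, one_mul, ← Complex.ofReal_sub, Complex.norm_real, Real.norm_eq_abs]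
    have h2 : dist a z ≤ ε := by rw [dist_comm]; exact Metric.mem_closedBall.mp hz
    rw [hzj, h1] at h2
    linarith [hε' j hj]
  -- S is differentiable on the closed ball
  have hSd : DifferentiableOn ℂ S (Metric.closedBall a ε) := by
    apply DifferentiableOn.fun_sum
    intro j hj
    have hj' : j ≠ i0 := (Finset.mem_erase.mp hj).1
    apply DifferentiableOn.div (differentiableOn_const _)
    · exact (differentiableOn_const _).mul (differentiableOn_id.sub (differentiableOn_const _))
    · intro z hz
      have := hdist j hj' z hz
      simp only [mul_ne_zero_iff, sub_ne_zero]
      exact ⟨two_ne_zero, this⟩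
  have hScont : ContinuousOn S (Metric.sphere a ε) :=
    (hSd.continuousOn).mono (Metric.sphere_subset_closedBall)
  -- the three pieces
  set p1 : ℂ → ℂ := fun z => ((c i0 : ℂ) ^ 2 / 4) * (z - a) ^ (-2 : ℤ) with hp1
  set p2 : ℂ → ℂ := fun z => (z - a)⁻¹ • ((c i0 : ℂ) * S z) with hp2
  set p3 : ℂ → ℂ := fun z => (S z) ^ 2 with hp3
  have ha_not_sphere : ∀ z ∈ Metric.sphere a ε, z ≠ a := by
    intro z hz hza
    rw [Metric.mem_sphere, hza, dist_self] at hz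
    exact hε.ne hz
  -- pointwise identity on the sphere
  have heq : Set.EqOn (fun z => (-(∑ i, (c i : ℂ) / (2 * (z - Complex.I * (y i : ℂ))))) ^ 2)
      (fun z => p1 z + p2 z + p3 z) (Metric.sphere a ε) := by
    intro z hz
    have hza : z - a ≠ 0 := sub_ne_zero.2 (ha_not_sphere z hz)
    have hsum : (∑ i, (c i : ℂ) / (2 * (z - Complex.I * (y i : ℂ))))
        = (c i0 : ℂ) / (2 * (z - a)) + S z := by
      rw [hS, ha]
      exact (Finset.add_sum_erase _ _ (Finset.mem_univ i0)).symm
    have h2 : (z - a) ^ (-2 : ℤ) = ((z - a) ^ 2)⁻¹ := by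
      rw [zpow_neg, zpow_two, ← pow_two]
    have key : ∀ w Sz : ℂ, w ≠ 0 → (-((c i0 : ℂ) / (2 * w) + Sz)) ^ 2
        = (c i0 : ℂ) ^ 2 / 4 * (w ^ 2)⁻¹ + w⁻¹ • ((c i0 : ℂ) * Sz) + Sz ^ 2 := by
      intro w Sz hw
      rw [smul_eq_mul]
      field_simp
      ring
    simp only [hsum, hp1, hp2, hp3, h2]
    exact key _ _ hza
  -- integrability of the pieces
  have hi1 : CircleIntegrable p1 a ε := by
    apply ContinuousOn.circleIntegrable hε.le
    apply ContinuousOn.mul continuousOn_const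
    intro z hz
    apply ContinuousWithinAt.zpow₀
    · exact (continuousWithinAt_id.sub continuousWithinAt_const)
    · left; exact sub_ne_zero.2 (ha_not_sphere z hz)
  have hi2 : CircleIntegrable p2 a ε := by
    apply ContinuousOn.circleIntegrable hε.le
    apply ContinuousOn.fun_smul
    · intro z hz
      exact ContinuousWithinAt.inv₀ (continuousWithinAt_id.sub continuousWithinAt_const)
        (sub_ne_zero.2 (ha_not_sphere z hz))
    · exact continuousOn_const.mul hScont
  have hi3 : CircleIntegrable p3 a ε := by
    apply ContinuousOn.circleIntegrable hε.le
    exact hScont.pow 2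
  -- compute the three integrals
  have hint1 : (∮ z in C(a, ε), p1 z) = 0 := by
    rw [hp1]
    simp only [circleIntegral.integral_const_mul]
    rw [circleIntegral.integral_sub_zpow_of_ne (by decide) a a ε]
    ring
  have hint2 : (∮ z in C(a, ε), p2 z) = (2 * Real.pi * Complex.I) • ((c i0 : ℂ) * S a) := by
    apply DifferentiableOn.circleIntegral_sub_inv_smul
    · exact (differentiableOn_const _).mul hSd
    · exact Metric.mem_ball_self hε
  have hint3 : (∮ z in C(a, ε), p3 z) = 0 := by
    have : DifferentiableOn ℂ p3 (Metric.closedBall a ε) := hSd.pow 2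
    apply Complex.circleIntegral_eq_zero_of_differentiable_on_off_countable hε.le
      (Set.countable_empty) this.continuousOn
    intro z hz
    exact this.differentiableAt (Filter.mem_of_superset (Metric.isOpen_ball.mem_nhds hz.1)
      Metric.ball_subset_closedBall)
  have hmain : (∮ z in C(a, ε),
      (-(∑ i, (c i : ℂ) / (2 * (z - Complex.I * (y i : ℂ))))) ^ 2)
      = (2 * Real.pi * Complex.I) • ((c i0 : ℂ) * S a) := by
    have hi12 : CircleIntegrable (fun z => p1 z + p2 z) a ε := hi1.add hi2
    rw [circleIntegral.integral_congr hε.le heq, circleIntegral_add' hi12 hi3,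
      circleIntegral_add' hi1 hi2, hint1, hint2, hint3]
    ring
  -- now the residue computation
  have hSa : (2 * Real.pi * Complex.I) • ((c i0 : ℂ) * S a)
      = ((Real.pi * ∑ i ∈ Finset.univ.erase i0, c i0 * c i / (y i0 - y i) : ℝ) : ℂ) := by
    rw [hS, smul_eq_mul, Finset.mul_sum, Finset.mul_sum, Finset.mul_sum]
    push_cast
    apply Finset.sum_congr rfl
    intro j hj
    have hj' : j ≠ i0 := (Finset.mem_erase.mp hj).1
    have hyj : (y i0 : ℂ) - y j ≠ 0 := by
      rw [sub_ne_zero]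
      exact_mod_cast fun h => hj' (hy h).symm
    have hIy : a - Complex.I * (y j : ℂ) = Complex.I * ((y i0 : ℂ) - y j) := by
      rw [ha]; ring
    rw [hIy]
    field_simp
  rw [hmain, hSa, Complex.ofReal_re]
  ring
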